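/- In model M1 with symmetric, independent innovations ε₀,...,ε_n, for any convex φ : ℝ → ℝ and any k ≤ n, the function h(σ₀, e₀, ..., e_{k−1}, x) = E[φ(S_n) | σ₀, ε₀ = e₀, ..., ε_{k−1} = e_{k−1}, ε_k = x], where S_n = σ₀ε₀ + g₁ε₁ + ... + g_nε_n is the cumulated sum, is convex in x for each fixed value of σ₀, e₀, ..., e_{k−1}. -/

import Mathlib

open MeasureTheory ProbabilityTheory Set Finset


namespace Stmt11Aux

open Filter


noncomputable def signedSum (T A : Finset ℕ) (h : ℕ → ℝ) : ℝ :=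
  ∑ j ∈ T, if j ∈ A then -(h j) else h j

noncomputable def Esum (φ : ℝ → ℝ) (T : Finset ℕ) (t : ℝ) (h : ℕ → ℝ) : ℝ :=
  ∑ A ∈ T.powerset, φ (t + signedSum T A h)

lemma Esum_empty (φ : ℝ → ℝ) (t : ℝ) (h : ℕ → ℝ) : Esum φ ∅ t h = φ t := by
  simp [Esum, signedSum]

lemma Esum_insert (φ : ℝ → ℝ) {a : ℕ} {T : Finset ℕ} (ha : a ∉ T) (t : ℝ) (h : ℕ → ℝ) :
    Esum φ (insert a T) t h = Esum φ T (t + h a) h + Esum φ T (t - h a) h := by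
  classical
  unfold Esum
  rw [Finset.sum_powerset_insert ha]
  congr 1
  · refine Finset.sum_congr rfl fun A hA => ?_
    have haA : a ∉ A := fun hc => ha (Finset.mem_powerset.1 hA hc)
    have : signedSum (insert a T) A h = h a + signedSum T A h := by
      unfold signedSum
      rw [Finset.sum_insert ha, if_neg haA]
    rw [this]; ring_nf
  · refine Finset.sum_congr rfl fun A hA => ?_
    have : signedSum (insert a T) (insert a A) h = -(h a) + signedSum T A h := by
      unfold signedSum
      rw [Finset.sum_insert ha, if_pos (Finset.mem_insert_self a A)]
      congr 1
      refine Finset.sum_congr rfl fun j hj => ?_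
      have hja : j ≠ a := fun hc => ha (hc ▸ hj)
      simp [Finset.mem_insert, hja]
    rw [this]; ring_nf

lemma Esum_convex {φ : ℝ → ℝ} (hφ : ConvexOn ℝ univ φ) (T : Finset ℕ) (h : ℕ → ℝ) :
    ConvexOn ℝ univ (fun t => Esum φ T t h) := by
  refine ⟨convex_univ, fun x _ y _ a b ha hb hab => ?_⟩
  simp only [smul_eq_mul, Esum, Finset.mul_sum, ← Finset.sum_add_distrib]
  refine Finset.sum_le_sum fun A _ => ?_
  have h1 : a * x + b * y + signedSum T A h
      = a * (x + signedSum T A h) + b * (y + signedSum T A h) := by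
    have : a * signedSum T A h + b * signedSum T A h = signedSum T A h := by
      rw [← add_mul, hab, one_mul]
    linarith [this]
  rw [h1]
  simpa using hφ.2 (mem_univ (x + signedSum T A h)) (mem_univ (y + signedSum T A h)) ha hb hab

lemma pair_mono {ψ : ℝ → ℝ} (hψ : ConvexOn ℝ univ ψ) (t : ℝ) {r r' : ℝ}
    (hr : 0 ≤ r) (hrr' : r ≤ r') :
    ψ (t + r) + ψ (t - r) ≤ ψ (t + r') + ψ (t - r') := by
  rcases eq_or_lt_of_le (hr.trans hrr') with h0 | h0
  · have : r = 0 := le_antisymm (hrr'.trans h0.symm.le) hr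
    rw [this, ← h0]
  · set lam := (r' + r) / (2 * r') with hlam
    have h2r' : (0:ℝ) < 2 * r' := by linarith
    have hl0 : 0 ≤ lam := by positivity
    have hl1 : 0 ≤ 1 - lam := by
      rw [hlam, sub_nonneg, div_le_one h2r']; linarith
    have hab : lam + (1 - lam) = 1 := by ring
    have e1 : lam * (t + r') + (1 - lam) * (t - r') = t + r := by
      rw [hlam]; linear_combination (div_mul_cancel₀ (r' + r) h2r'.ne')
    have e2 : (1 - lam) * (t + r') + lam * (t - r') = t - r := by
      rw [hlam]; linear_combination -(div_mul_cancel₀ (r' + r) h2r'.ne')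
    have i1 := hψ.2 (mem_univ (t + r')) (mem_univ (t - r')) hl0 hl1 hab
    have i2 := hψ.2 (mem_univ (t + r')) (mem_univ (t - r')) hl1 hl0 (by ring)
    simp only [smul_eq_mul] at i1 i2
    rw [e1] at i1; rw [e2] at i2
    linarith

lemma Esum_mono {φ : ℝ → ℝ} (hφ : ConvexOn ℝ univ φ) (T : Finset ℕ) {h h' : ℕ → ℝ}
    (h0 : ∀ j ∈ T, 0 ≤ h j) (hle : ∀ j ∈ T, h j ≤ h' j) :
    ∀ t, Esum φ T t h ≤ Esum φ T t h' := by
  classical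
  induction T using Finset.induction_on with
  | empty => intro t; simp [Esum_empty]
  | @insert a T ha ih =>
    intro t
    have h0' : ∀ j ∈ T, 0 ≤ h j := fun j hj => h0 j (Finset.mem_insert_of_mem hj)
    have hle' : ∀ j ∈ T, h j ≤ h' j := fun j hj => hle j (Finset.mem_insert_of_mem hj)
    have ib := ih h0' hle'
    rw [Esum_insert φ ha, Esum_insert φ ha]
    calc Esum φ T (t + h a) h + Esum φ T (t - h a) h
        ≤ Esum φ T (t + h a) h' + Esum φ T (t - h a) h' := add_le_add (ib _) (ib _)
      _ ≤ Esum φ T (t + h' a) h' + Esum φ T (t - h' a) h' :=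
          pair_mono (Esum_convex hφ T h') t (h0 a (Finset.mem_insert_self a T))
            (hle a (Finset.mem_insert_self a T))

lemma Esum_abs (φ : ℝ → ℝ) (T : Finset ℕ) (h : ℕ → ℝ) (t : ℝ) :
    Esum φ T t h = Esum φ T t (fun j => |h j|) := by
  classical
  induction T using Finset.induction_on generalizing t with
  | empty => simp [Esum_empty]
  | @insert a T ha ih =>
    rw [Esum_insert φ ha, Esum_insert φ ha, ih, ih]
    rcases le_or_gt 0 (h a) with h0 | h0
    · rw [abs_of_nonneg h0]
    · rw [abs_of_neg h0, sub_neg_eq_add, ← sub_eq_add_neg, add_comm]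

lemma Esum_combo {φ : ℝ → ℝ} (hφ : ConvexOn ℝ univ φ) (T : Finset ℕ) {a b : ℝ}
    (ha : 0 ≤ a) (hb : 0 ≤ b) (hab : a + b = 1) (tx ty : ℝ) (hx hy : ℕ → ℝ) :
    Esum φ T (a * tx + b * ty) (fun j => a * hx j + b * hy j)
      ≤ a * Esum φ T tx hx + b * Esum φ T ty hy := by
  classical
  unfold Esum
  rw [Finset.mul_sum, Finset.mul_sum, ← Finset.sum_add_distrib]
  refine Finset.sum_le_sum fun A _ => ?_
  have hs : signedSum T A (fun j => a * hx j + b * hy j)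
      = a * signedSum T A hx + b * signedSum T A hy := by
    unfold signedSum
    rw [Finset.mul_sum, Finset.mul_sum, ← Finset.sum_add_distrib]
    refine Finset.sum_congr rfl fun j _ => ?_
    split_ifs <;> ring
  rw [hs, show a * tx + b * ty + (a * signedSum T A hx + b * signedSum T A hy)
      = a * (tx + signedSum T A hx) + b * (ty + signedSum T A hy) by ring]
  simpa using hφ.2 (mem_univ (tx + signedSum T A hx)) (mem_univ (ty + signedSum T A hy)) ha hb hab

lemma Esum_master {φ : ℝ → ℝ} (hφ : ConvexOn ℝ univ φ) (T : Finset ℕ) {a b : ℝ}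
    (ha : 0 ≤ a) (hb : 0 ≤ b) (hab : a + b = 1) (tx ty : ℝ) (hx hy hz : ℕ → ℝ)
    (hbound : ∀ j ∈ T, |hz j| ≤ a * |hx j| + b * |hy j|) :
    Esum φ T (a * tx + b * ty) hz ≤ a * Esum φ T tx hx + b * Esum φ T ty hy := by
  rw [Esum_abs φ T hz, Esum_abs φ T hx, Esum_abs φ T hy]
  calc Esum φ T (a * tx + b * ty) (fun j => |hz j|)
      ≤ Esum φ T (a * tx + b * ty) (fun j => a * |hx j| + b * |hy j|) :=
        Esum_mono hφ T (fun j _ => abs_nonneg _) hbound _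
    _ ≤ a * Esum φ T tx (fun j => |hx j|) + b * Esum φ T ty (fun j => |hy j|) :=
        Esum_combo hφ T ha hb hab _ _ _ _



variable {f : ℝ → ℝ → ℝ}

lemma fmono1 (hf_mono : MonotoneOn (fun p : ℝ × ℝ => f p.1 p.2) (Set.Ici 0 ×ˢ Set.Ici 0))
    {c : ℝ} (hc : 0 ≤ c) : MonotoneOn (fun x => f x c) (Set.Ici 0) := by
  intro x hx y hy hxy
  exact hf_mono (Set.mk_mem_prod hx (Set.mem_Ici.2 hc)) (Set.mk_mem_prod hy (Set.mem_Ici.2 hc))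
    (Prod.mk_le_mk.2 ⟨hxy, le_rfl⟩)

lemma fmono2 (hf_mono : MonotoneOn (fun p : ℝ × ℝ => f p.1 p.2) (Set.Ici 0 ×ˢ Set.Ici 0))
    {c : ℝ} (hc : 0 ≤ c) : MonotoneOn (fun y => f c y) (Set.Ici 0) := by
  intro x hx y hy hxy
  exact hf_mono (Set.mk_mem_prod (Set.mem_Ici.2 hc) hx) (Set.mk_mem_prod (Set.mem_Ici.2 hc) hy)
    (Prod.mk_le_mk.2 ⟨le_rfl, hxy⟩)

lemma comp_convex {ψ h : ℝ → ℝ} (hψm : MonotoneOn ψ (Set.Ici 0))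
    (hψc : ConvexOn ℝ (Set.Ici 0) ψ) (hh : ConvexOn ℝ univ h) (hh0 : ∀ x, 0 ≤ h x) :
    ConvexOn ℝ univ (fun x => ψ (h x)) := by
  refine ⟨convex_univ, fun x _ y _ a b ha hb hab => ?_⟩
  simp only [smul_eq_mul]
  have hcomb : h (a * x + b * y) ≤ a * h x + b * h y := by
    simpa using hh.2 (mem_univ x) (mem_univ y) ha hb hab
  have hmem : a * h x + b * h y ∈ Set.Ici (0:ℝ) :=
    Set.mem_Ici.2 (add_nonneg (mul_nonneg ha (hh0 x)) (mul_nonneg hb (hh0 y)))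
  calc ψ (h (a * x + b * y)) ≤ ψ (a * h x + b * h y) :=
        hψm (Set.mem_Ici.2 (hh0 _)) hmem hcomb
    _ ≤ a * ψ (h x) + b * ψ (h y) := by
        simpa using hψc.2 (Set.mem_Ici.2 (hh0 x)) (Set.mem_Ici.2 (hh0 y)) ha hb hab

lemma measurable_f_comp
    (hf_mono : MonotoneOn (fun p : ℝ × ℝ => f p.1 p.2) (Set.Ici 0 ×ˢ Set.Ici 0))
    (hf_cx1 : ∀ y ∈ Set.Ici (0:ℝ), ConvexOn ℝ (Set.Ici (0:ℝ)) (fun x => f x y))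
    {α : Type*} [MeasurableSpace α] {A B : α → ℝ} (hA : Measurable A) (hB : Measurable B)
    (hA0 : ∀ a, 0 ≤ A a) (hB0 : ∀ a, 0 ≤ B a) :
    Measurable fun a => f (A a) (B a) := by
  have slice : ∀ c : ℝ, 0 ≤ c → Monotone (fun y => f c (max y 0)) := by
    intro c hc y y' hyy'
    exact hf_mono (Set.mk_mem_prod (Set.mem_Ici.2 hc) (Set.mem_Ici.2 (le_max_right _ _)))
      (Set.mk_mem_prod (Set.mem_Ici.2 hc) (Set.mem_Ici.2 (le_max_right _ _)))
      (Prod.mk_le_mk.2 ⟨le_rfl, max_le_max hyy' le_rfl⟩)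
  have measFm : ∀ m : ℕ, Measurable fun a => f ((⌈A a * m⌉₊ : ℝ) / m) (B a) := by
    intro m
    have h1 : Measurable fun p : α × ℕ => f ((p.2 : ℝ) / m) (max (B p.1) 0) := by
      apply measurable_from_prod_countable_left
      intro nn
      exact ((slice ((nn : ℝ) / m) (by positivity)).measurable).comp hB
    have h2 : Measurable fun a => (a, ⌈A a * m⌉₊) :=
      measurable_id.prodMk (Nat.measurable_ceil.comp (hA.mul measurable_const))
    have h3 := h1.comp h2
    simpa only [Function.comp_def, max_eq_left (hB0 _)] using h3
  have tend : ∀ a, Tendsto (fun m : ℕ => f ((⌈A a * m⌉₊ : ℝ) / m) (B a)) atTop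
      (nhds (f (A a) (B a))) := by
    intro a
    rcases eq_or_lt_of_le (hA0 a) with h0 | hpos
    · have : ∀ m : ℕ, f ((⌈A a * m⌉₊ : ℝ) / m) (B a) = f (A a) (B a) := by
        intro m
        rw [← h0]
        norm_num
      simp only [this]
      exact tendsto_const_nhds
    · have hc : Tendsto (fun m : ℕ => (⌈A a * m⌉₊ : ℝ) / m) atTop (nhds (A a)) := by
        apply tendsto_of_tendsto_of_tendsto_of_le_of_le' tendsto_const_nhds
          (h := fun m : ℕ => A a + 1 / (m:ℝ))
        · simpa using (tendsto_const_nhds (x := A a)).add (tendsto_one_div_atTop_nhds_zero_nat (𝕜 := ℝ))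
        · filter_upwards [eventually_ge_atTop 1] with m hm
          have hm0 : (0:ℝ) < m := by exact_mod_cast hm
          rw [le_div_iff₀ hm0]
          calc A a * m ≤ ⌈A a * m⌉₊ := Nat.le_ceil _
            _ = (⌈A a * m⌉₊ : ℝ) := rfl
        · filter_upwards [eventually_ge_atTop 1] with m hm
          have hm0 : (0:ℝ) < m := by exact_mod_cast hm
          rw [div_le_iff₀ hm0]
          have := (Nat.ceil_lt_add_one (by positivity : (0:ℝ) ≤ A a * m)).le
          calc (⌈A a * m⌉₊ : ℝ) ≤ A a * m + 1 := this
            _ = (A a + 1 / m) * m := by field_simp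
      have hcont : ContinuousAt (fun c => f c (B a)) (A a) := by
        have hco := (hf_cx1 (B a) (Set.mem_Ici.2 (hB0 a))).continuousOn_interior
        rw [interior_Ici] at hco
        exact hco.continuousAt (Ioi_mem_nhds hpos)
      exact (hcont.tendsto).comp hc
  exact measurable_of_tendsto_metrizable measFm (tendsto_pi_nhds.2 tend)

lemma convexOn_abs' : ConvexOn ℝ (univ : Set ℝ) (fun x => |x|) := by
  refine ⟨convex_univ, fun x _ y _ a b ha hb _ => ?_⟩
  simp only [smul_eq_mul]
  calc |a * x + b * y| ≤ |a * x| + |b * y| := abs_add_le _ _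
    _ = a * |x| + b * |y| := by rw [abs_mul, abs_mul, abs_of_nonneg ha, abs_of_nonneg hb]



variable {f : ℝ → ℝ → ℝ} {g : (ℕ → ℝ) → ℕ → ℝ} {s0 : ℝ}

lemma g_congr (hg0 : ∀ v, g v 0 = s0) (hgrec : ∀ v j, g v (j + 1) = f |v j| (g v j)) :
    ∀ (j : ℕ) (v w : ℕ → ℝ), (∀ i, i < j → |v i| = |w i|) → g v j = g w j := by
  intro j
  induction j with
  | zero => intro v w _; rw [hg0, hg0]
  | succ j ih =>
    intro v w h
    rw [hgrec, hgrec, h j (Nat.lt_succ_self j), ih v w (fun i hi => h i (hi.trans (Nat.lt_succ_self j)))]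

lemma g_nonneg (hf_nonneg : ∀ x y, 0 ≤ x → 0 ≤ y → 0 ≤ f x y) (hs0 : 0 ≤ s0)
    (hg0 : ∀ v, g v 0 = s0) (hgrec : ∀ v j, g v (j + 1) = f |v j| (g v j)) :
    ∀ (v : ℕ → ℝ) (j : ℕ), 0 ≤ g v j := by
  intro v j
  induction j with
  | zero => rw [hg0]; exact hs0
  | succ j ih => rw [hgrec]; exact hf_nonneg _ _ (abs_nonneg _) ih

lemma g_measurable
    (hf_mono : MonotoneOn (fun p : ℝ × ℝ => f p.1 p.2) (Set.Ici 0 ×ˢ Set.Ici 0))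
    (hf_cx1 : ∀ y ∈ Set.Ici (0:ℝ), ConvexOn ℝ (Set.Ici (0:ℝ)) (fun x => f x y))
    (hf_nonneg : ∀ x y, 0 ≤ x → 0 ≤ y → 0 ≤ f x y) (hs0 : 0 ≤ s0)
    (hg0 : ∀ v, g v 0 = s0) (hgrec : ∀ v j, g v (j + 1) = f |v j| (g v j))
    {α : Type*} [MeasurableSpace α] (V : ℕ → α → ℝ) (hV : ∀ j, Measurable (V j)) :
    ∀ j, Measurable fun a => g (fun i => V i a) j := by
  intro j
  induction j with
  | zero => simp only [hg0]; exact measurable_const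
  | succ j ih =>
    simp only [hgrec]
    exact measurable_f_comp hf_mono hf_cx1 (hV j).abs ih (fun a => abs_nonneg _)
      (fun a => g_nonneg hf_nonneg hs0 hg0 hgrec _ j)

lemma S_measurable {S : (ℕ → ℝ) → ℝ} {n : ℕ}
    (hS : ∀ v, S v = ∑ j ∈ range (n + 1), g v j * v j)
    (hf_mono : MonotoneOn (fun p : ℝ × ℝ => f p.1 p.2) (Set.Ici 0 ×ˢ Set.Ici 0))
    (hf_cx1 : ∀ y ∈ Set.Ici (0:ℝ), ConvexOn ℝ (Set.Ici (0:ℝ)) (fun x => f x y))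
    (hf_nonneg : ∀ x y, 0 ≤ x → 0 ≤ y → 0 ≤ f x y) (hs0 : 0 ≤ s0)
    (hg0 : ∀ v, g v 0 = s0) (hgrec : ∀ v j, g v (j + 1) = f |v j| (g v j))
    {α : Type*} [MeasurableSpace α] (V : ℕ → α → ℝ) (hV : ∀ j, Measurable (V j)) :
    Measurable fun a => S (fun i => V i a) := by
  simp only [hS]
  exact Finset.measurable_sum _ fun j _ =>
    (g_measurable hf_mono hf_cx1 hf_nonneg hs0 hg0 hgrec V hV j).mul (hV j)

lemma S_congr {S : (ℕ → ℝ) → ℝ} {n : ℕ}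
    (hS : ∀ v, S v = ∑ j ∈ range (n + 1), g v j * v j)
    (hg0 : ∀ v, g v 0 = s0) (hgrec : ∀ v j, g v (j + 1) = f |v j| (g v j))
    (v w : ℕ → ℝ) (h : ∀ j, j ≤ n → v j = w j) : S v = S w := by
  rw [hS, hS]
  refine Finset.sum_congr rfl fun j hj => ?_
  have hjn : j ≤ n := Nat.lt_succ_iff.1 (Finset.mem_range.1 hj)
  rw [h j hjn, g_congr hg0 hgrec j v w (fun i hi => by rw [h i ((hi.le.trans hjn))])]


end Stmt11Aux


/-- in model M1 with independent symmetric innovations, for convex `φ`, the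
conditional expectation `x ↦ E[φ(S_n) | σ₀ = s₀, ε₀ = e₀, …, ε_{k-1} = e_{k-1}, ε_k = x]`
is convex.  Here `S_n = Σ_{j≤n} σ_j ε_j` with `σ₀ = s₀`, `σ_{j+1} = f(|ε_j|, σ_j)`; by
independence, the conditional expectation is obtained by fixing the first `k` innovations
at the values `e₀, …, e_{k-1}`, setting `ε_k = x`, and integrating over the remaining
innovations. -/
theorem stmt11 {Ω : Type*} [MeasurableSpace Ω] (μ : Measure Ω) [IsProbabilityMeasure μ]
    (f : ℝ → ℝ → ℝ)
    (hf_mono : MonotoneOn (fun p : ℝ × ℝ => f p.1 p.2) (Set.Ici 0 ×ˢ Set.Ici 0))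
    (hf_cx1 : ∀ y ∈ Set.Ici (0:ℝ), ConvexOn ℝ (Set.Ici (0:ℝ)) (fun x => f x y))
    (hf_cx2 : ∀ x ∈ Set.Ici (0:ℝ), ConvexOn ℝ (Set.Ici (0:ℝ)) (fun y => f x y))
    (hf_nonneg : ∀ x y, 0 ≤ x → 0 ≤ y → 0 ≤ f x y)
    (ε : ℕ → Ω → ℝ) (hεmeas : ∀ j, Measurable (ε j))
    (hindep : iIndepFun (m := fun _ : ℕ => Real.measurableSpace) ε μ)
    (hsymm : ∀ j, Measure.map (ε j) μ = Measure.map (fun ω => -(ε j ω)) μ)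
    (n k : ℕ) (hk : k ≤ n)
    (s0 : ℝ) (hs0 : 0 ≤ s0) (e : ℕ → ℝ)
    (φ : ℝ → ℝ) (hφ : ConvexOn ℝ univ φ)
    -- the volatility functional: `g v j = σ_j` when the innovations take the values `v`
    (g : (ℕ → ℝ) → ℕ → ℝ)
    (hg0 : ∀ v, g v 0 = s0)
    (hgrec : ∀ v j, g v (j + 1) = f |v j| (g v j))
    -- the total logreturn functional
    (S : (ℕ → ℝ) → ℝ)
    (hS : ∀ v, S v = ∑ j ∈ range (n + 1), g v j * v j)
    -- the mixed innovation vector: fixed values below `k`, the variable `x` at `k`,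
    -- random innovations above `k`
    (inn : ℝ → Ω → ℕ → ℝ)
    (hinn : ∀ x ω j, inn x ω j = if j < k then e j else if j = k then x else ε j ω)
    (hint : ∀ x : ℝ, Integrable (fun ω => φ (S (inn x ω))) μ) :
    ConvexOn ℝ univ (fun x => ∫ ω, φ (S (inn x ω)) ∂μ) := by
  classical
  have hφc : Continuous φ := by
    have h := hφ.continuousOn isOpen_univ
    rwa [continuousOn_univ] at h
  -- abbreviations
  set T : Finset ℕ := Finset.Ioc k n with hT
  set vA : Finset ℕ → ℝ → Ω → ℕ → ℝ := fun A x ω j =>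
    if j < k then e j else if j = k then x
    else (if j ∈ A then -(ε j ω) else ε j ω) with hvA
  set w0 : ℕ → ℝ := fun j => if j < k then e j else 0 with hw0
  set c0 : ℝ := ∑ j ∈ range k, g w0 j * e j with hc0
  have gnn : ∀ (v : ℕ → ℝ) (j : ℕ), 0 ≤ g v j :=
    Stmt11Aux.g_nonneg hf_nonneg hs0 hg0 hgrec
  have gcong := Stmt11Aux.g_congr hg0 hgrec
  -- the inn function agrees with vA ∅
  have hvz : ∀ (x : ℝ) (ω : Ω), inn x ω = vA ∅ x ω := by
    intro x ω; funext j
    rw [hinn]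
    simp only [hvA, Finset.notMem_empty, if_false]
  -- g at indices ≤ k is constant
  have hgv : ∀ (A : Finset ℕ) (x : ℝ) (ω : Ω) (j : ℕ), j ≤ k → g (vA A x ω) j = g w0 j := by
    intro A x ω j hj
    refine gcong j _ _ fun i hi => ?_
    have hik : i < k := lt_of_lt_of_le hi hj
    simp only [hvA, hw0, if_pos hik]
  -- g does not depend on the sign flips
  have hgA : ∀ (A : Finset ℕ) (x : ℝ) (ω : Ω) (j : ℕ), g (vA A x ω) j = g (vA ∅ x ω) j := by
    intro A x ω j
    refine gcong j _ _ fun i _ => ?_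
    simp only [hvA, Finset.notMem_empty, if_false]
    by_cases h1 : i < k
    · simp [h1]
    · by_cases h2 : i = k
      · simp [h1, h2]
      · simp only [if_neg h1, if_neg h2]
        by_cases h3 : i ∈ A
        · rw [if_pos h3, abs_neg]
        · rw [if_neg h3]
  -- convexity of x ↦ g (vA ∅ x ω) j
  have hgconvex : ∀ (ω : Ω) (j : ℕ), ConvexOn ℝ univ (fun x => g (vA ∅ x ω) j) := by
    intro ω j
    induction j with
    | zero =>
      have h0 : (fun x => g (vA ∅ x ω) 0) = fun _ => s0 := funext fun x => hg0 _
      rw [h0]; exact convexOn_const _ convex_univ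
    | succ j ih =>
      rcases lt_trichotomy j k with hjk | hjk | hjk
      · have hle : j + 1 ≤ k := hjk
        have h0 : (fun x => g (vA ∅ x ω) (j+1)) = fun _ => g w0 (j+1) :=
          funext fun x => hgv ∅ x ω (j+1) hle
        rw [h0]; exact convexOn_const _ convex_univ
      · subst hjk
        have h0 : (fun x => g (vA ∅ x ω) (j+1)) = fun x => f |x| (g w0 j) := by
          funext x
          rw [hgrec]
          have h1 : vA ∅ x ω j = x := by simp [hvA]
          rw [h1, hgv ∅ x ω j le_rfl]
        rw [h0]
        exact Stmt11Aux.comp_convex (Stmt11Aux.fmono1 hf_mono (gnn w0 j))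
          (hf_cx1 _ (Set.mem_Ici.2 (gnn w0 j))) Stmt11Aux.convexOn_abs' (fun x => abs_nonneg x)
      · have h0 : (fun x => g (vA ∅ x ω) (j+1)) = fun x => f |ε j ω| (g (vA ∅ x ω) j) := by
          funext x
          rw [hgrec]
          have h1 : vA ∅ x ω j = ε j ω := by
            simp only [hvA, Finset.notMem_empty, if_false,
              if_neg (by omega : ¬ j < k), if_neg (by omega : ¬ j = k)]
          rw [h1]
        rw [h0]
        exact Stmt11Aux.comp_convex (Stmt11Aux.fmono2 hf_mono (abs_nonneg _))
          (hf_cx2 _ (Set.mem_Ici.2 (abs_nonneg _))) ih (fun x => gnn _ _)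
  -- decomposition of S
  have hSdecomp : ∀ (A : Finset ℕ) (x : ℝ) (ω : Ω), A ⊆ T →
      S (vA A x ω) = (c0 + g w0 k * x)
        + Stmt11Aux.signedSum T A (fun j => g (vA ∅ x ω) j * ε j ω) := by
    intro A x ω hA
    rw [hS]
    have hsplit : range (n+1) = range (k+1) ∪ T := by
      ext j
      simp only [Finset.mem_range, Finset.mem_union, hT, Finset.mem_Ioc]
      omega
    have hdisj : Disjoint (range (k+1)) T := by
      rw [Finset.disjoint_left]
      intro j hj hjT
      rw [Finset.mem_range] at hj
      rw [hT, Finset.mem_Ioc] at hjT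
      omega
    rw [hsplit, Finset.sum_union hdisj]
    congr 1
    · rw [Finset.sum_range_succ]
      congr 1
      · rw [hc0]
        refine Finset.sum_congr rfl fun j hj => ?_
        rw [Finset.mem_range] at hj
        rw [hgv A x ω j hj.le]
        congr 1
        simp only [hvA, if_pos hj]
      · rw [hgv A x ω k le_rfl]
        congr 1
        simp [hvA]
    · unfold Stmt11Aux.signedSum
      refine Finset.sum_congr rfl fun j hj => ?_
      have hjT : k < j ∧ j ≤ n := by rwa [hT, Finset.mem_Ioc] at hj
      have hAj : j ∈ A → j ∈ T := fun h => hA h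
      rw [hgA A x ω j]
      have hv : vA A x ω j = if j ∈ A then -(ε j ω) else ε j ω := by
        simp only [hvA, if_neg (by omega : ¬ j < k), if_neg (by omega : ¬ j = k)]
      rw [hv]
      split_ifs <;> ring
  -- THE FLIP STEP
  have flipstep : ∀ (x : ℝ) (i : ℕ) (A : Finset ℕ), i ∈ T → i ∉ A → A ⊆ T →
      ((Integrable (fun ω => φ (S (vA A x ω))) μ ↔
        Integrable (fun ω => φ (S (vA (insert i A) x ω))) μ)
      ∧ ∫ ω, φ (S (vA (insert i A) x ω)) ∂μ = ∫ ω, φ (S (vA A x ω)) ∂μ) := by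
    intro x i A hiT hiA hAT
    set s : Finset ℕ := T.erase i with hs
    set VH : ℕ → ℝ × ({j // j ∈ s} → ℝ) → ℝ := fun j p =>
      if j < k then e j else if j = k then x
      else if j = i then p.1
      else if hj : j ∈ s then (if j ∈ A then -(p.2 ⟨j, hj⟩) else p.2 ⟨j, hj⟩) else 0 with hVH
    have hVHmeas : ∀ j, Measurable (VH j) := by
      intro j
      simp only [hVH]
      by_cases h1 : j < k
      · simp only [if_pos h1]; exact measurable_const
      · simp only [if_neg h1]
        by_cases h2 : j = k
        · simp only [if_pos h2]; exact measurable_const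
        · simp only [if_neg h2]
          by_cases h3 : j = i
          · simp only [if_pos h3]; exact measurable_fst
          · simp only [if_neg h3]
            by_cases h4 : j ∈ s
            · simp only [dif_pos h4]
              by_cases h5 : j ∈ A
              · simp only [if_pos h5]
                exact ((measurable_pi_apply _).comp measurable_snd).neg
              · simp only [if_neg h5]
                exact (measurable_pi_apply _).comp measurable_snd
            · simp only [dif_neg h4]; exact measurable_const
    set H : ℝ × ({j // j ∈ s} → ℝ) → ℝ := fun p => φ (S (fun j => VH j p)) with hH
    have hHmeas : Measurable H := by
      rw [hH]
      exact hφc.measurable.comp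
        (Stmt11Aux.S_measurable hS hf_mono hf_cx1 hf_nonneg hs0 hg0 hgrec VH hVHmeas)
    set P1 : Ω → ℝ × ({j // j ∈ s} → ℝ) := fun ω => (ε i ω, fun j => ε j.1 ω) with hP1
    set P2 : Ω → ℝ × ({j // j ∈ s} → ℝ) := fun ω => (-(ε i ω), fun j => ε j.1 ω) with hP2
    have htup : Measurable (fun ω => (fun j : {j // j ∈ s} => ε j.1 ω)) :=
      measurable_pi_lambda _ fun j => hεmeas j.1
    have hP1m : Measurable P1 := (hεmeas i).prodMk htup
    have hP2m : Measurable P2 := (hεmeas i).neg.prodMk htup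
    have hdisj : Disjoint ({i} : Finset ℕ) s :=
      Finset.disjoint_singleton_left.2 (Finset.notMem_erase i T)
    have hpairIndep : IndepFun (ε i) (fun ω (j : {j // j ∈ s}) => ε j.1 ω) μ := by
      have h0 := hindep.indepFun_finset {i} s hdisj hεmeas
      have h1 := h0.comp
        (φ := fun v : {j // j ∈ ({i} : Finset ℕ)} → ℝ => v ⟨i, Finset.mem_singleton_self i⟩)
        (ψ := id) (measurable_pi_apply (X := fun _ : {j // j ∈ ({i} : Finset ℕ)} => ℝ) _) measurable_id
      exact h1
    have hnegIndep : IndepFun (fun ω => -(ε i ω)) (fun ω (j : {j // j ∈ s}) => ε j.1 ω) μ := by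
      have h1 := hpairIndep.comp (φ := fun t : ℝ => -t) (ψ := id) measurable_neg measurable_id
      exact h1
    have law1 := (indepFun_iff_map_prod_eq_prod_map_map
      (hεmeas i).aemeasurable htup.aemeasurable).1 hpairIndep
    have law2 := (indepFun_iff_map_prod_eq_prod_map_map
      (hεmeas i).neg.aemeasurable htup.aemeasurable).1 hnegIndep
    have lawEq : μ.map P1 = μ.map P2 := by
      rw [hP1, hP2]
      rw [law1]
      have law2' : μ.map (fun ω => (-(ε i ω), fun j : {j // j ∈ s} => ε j.1 ω))
          = (μ.map (fun ω => -(ε i ω))).prod (μ.map (fun ω (j : {j // j ∈ s}) => ε j.1 ω)) := law2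
      rw [law2', hsymm i]
    have hid1 : (fun ω => φ (S (vA A x ω))) = fun ω => H (P1 ω) := by
      funext ω
      simp only [hH, hP1]
      congr 1
      refine Stmt11Aux.S_congr hS hg0 hgrec _ _ fun j hjn => ?_
      simp only [hVH, hvA]
      by_cases h1 : j < k
      · simp [h1]
      · by_cases h2 : j = k
        · simp [h1, h2]
        · rw [if_neg h1, if_neg h2, if_neg h1, if_neg h2]
          by_cases h3 : j = i
          · subst h3; rw [if_neg hiA, if_pos rfl]
          · have hjs : j ∈ s := by
              rw [hs, Finset.mem_erase]
              refine ⟨h3, ?_⟩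
              rw [hT, Finset.mem_Ioc]; omega
            rw [if_neg h3, dif_pos hjs]
    have hid2 : (fun ω => φ (S (vA (insert i A) x ω))) = fun ω => H (P2 ω) := by
      funext ω
      simp only [hH, hP2]
      congr 1
      refine Stmt11Aux.S_congr hS hg0 hgrec _ _ fun j hjn => ?_
      simp only [hVH, hvA]
      by_cases h1 : j < k
      · simp [h1]
      · by_cases h2 : j = k
        · simp [h1, h2]
        · rw [if_neg h1, if_neg h2, if_neg h1, if_neg h2]
          by_cases h3 : j = i
          · subst h3; rw [if_pos (Finset.mem_insert_self j A), if_pos rfl]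
          · have hjs : j ∈ s := by
              rw [hs, Finset.mem_erase]
              refine ⟨h3, ?_⟩
              rw [hT, Finset.mem_Ioc]; omega
            rw [if_neg h3, dif_pos hjs]
            by_cases h5 : j ∈ A
            · rw [if_pos (Finset.mem_insert_of_mem h5), if_pos h5]
            · have h6 : j ∉ insert i A := by
                rw [Finset.mem_insert]; push_neg; exact ⟨h3, h5⟩
              rw [if_neg h6, if_neg h5]
    have int1 : Integrable (fun ω => H (P1 ω)) μ ↔ Integrable H (μ.map P1) := by
      rw [integrable_map_measure hHmeas.aestronglyMeasurable hP1m.aemeasurable]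
      exact Iff.rfl
    have int2 : Integrable (fun ω => H (P2 ω)) μ ↔ Integrable H (μ.map P2) := by
      rw [integrable_map_measure hHmeas.aestronglyMeasurable hP2m.aemeasurable]
      exact Iff.rfl
    constructor
    · rw [hid1, hid2, int1, int2, lawEq]
    · rw [hid1, hid2]
      rw [show ∫ ω, H (P2 ω) ∂μ = ∫ p, H p ∂(μ.map P2) from
        (integral_map hP2m.aemeasurable hHmeas.aestronglyMeasurable).symm]
      rw [show ∫ ω, H (P1 ω) ∂μ = ∫ p, H p ∂(μ.map P1) from
        (integral_map hP1m.aemeasurable hHmeas.aestronglyMeasurable).symm]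
      rw [lawEq]

  -- iterate the flips
  have keyInt : ∀ (x : ℝ) (A : Finset ℕ), A ⊆ T →
      Integrable (fun ω => φ (S (vA A x ω))) μ ∧
      ∫ ω, φ (S (vA A x ω)) ∂μ = ∫ ω, φ (S (inn x ω)) ∂μ := by
    intro x A
    induction A using Finset.induction_on with
    | empty =>
      intro _
      have h0 : (fun ω => φ (S (vA ∅ x ω))) = fun ω => φ (S (inn x ω)) :=
        funext fun ω => by rw [hvz]
      rw [h0]
      exact ⟨hint x, rfl⟩
    | @insert i A hiA ih =>
      intro hsub
      have hiT : i ∈ T := hsub (Finset.mem_insert_self i A)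
      have hAT : A ⊆ T := fun j hj => hsub (Finset.mem_insert_of_mem hj)
      obtain ⟨ibase, ebase⟩ := ih hAT
      obtain ⟨ifl, efl⟩ := flipstep x i A hiT hiA hAT
      exact ⟨ifl.1 ibase, efl.trans ebase⟩
  -- FINAL ASSEMBLY
  refine ⟨convex_univ, fun x _ y _ a b ha hb hab => ?_⟩
  simp only [smul_eq_mul]
  set z := a * x + b * y with hz
  -- pointwise inequality
  have hpt : ∀ ω : Ω, (∑ A ∈ T.powerset, φ (S (vA A z ω)))
      ≤ a * (∑ A ∈ T.powerset, φ (S (vA A x ω)))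
        + b * (∑ A ∈ T.powerset, φ (S (vA A y ω))) := by
    intro ω
    have ex : ∀ w : ℝ, (∑ A ∈ T.powerset, φ (S (vA A w ω)))
        = Stmt11Aux.Esum φ T (c0 + g w0 k * w) (fun j => g (vA ∅ w ω) j * ε j ω) := by
      intro w
      unfold Stmt11Aux.Esum
      exact Finset.sum_congr rfl fun A hA => by
        rw [hSdecomp A w ω (Finset.mem_powerset.1 hA)]
    rw [ex x, ex y, ex z]
    have ht : c0 + g w0 k * z = a * (c0 + g w0 k * x) + b * (c0 + g w0 k * y) := by
      rw [hz]; linear_combination (-c0) * hab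
    rw [ht]
    refine Stmt11Aux.Esum_master hφ T ha hb hab _ _ _ _ _ fun j hj => ?_
    have h1 : g (vA ∅ z ω) j ≤ a * g (vA ∅ x ω) j + b * g (vA ∅ y ω) j := by
      have := (hgconvex ω j).2 (mem_univ x) (mem_univ y) ha hb hab
      simpa [smul_eq_mul] using this
    calc |g (vA ∅ z ω) j * ε j ω| = g (vA ∅ z ω) j * |ε j ω| := by
          rw [abs_mul, abs_of_nonneg (gnn _ _)]
      _ ≤ (a * g (vA ∅ x ω) j + b * g (vA ∅ y ω) j) * |ε j ω| :=
          mul_le_mul_of_nonneg_right h1 (abs_nonneg _)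
      _ = a * |g (vA ∅ x ω) j * ε j ω| + b * |g (vA ∅ y ω) j * ε j ω| := by
          rw [abs_mul, abs_mul, abs_of_nonneg (gnn _ _), abs_of_nonneg (gnn _ _)]; ring
  -- integrate the pointwise inequality
  have sumint : ∀ w : ℝ, Integrable (fun ω => ∑ A ∈ T.powerset, φ (S (vA A w ω))) μ :=
    fun w => integrable_finset_sum _ fun A hA => (keyInt w A (Finset.mem_powerset.1 hA)).1
  have hI : ∫ ω, (∑ A ∈ T.powerset, φ (S (vA A z ω))) ∂μ
      ≤ ∫ ω, (a * (∑ A ∈ T.powerset, φ (S (vA A x ω)))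
          + b * (∑ A ∈ T.powerset, φ (S (vA A y ω)))) ∂μ :=
    integral_mono (sumint z) (((sumint x).const_mul a).add ((sumint y).const_mul b)) hpt
  set c : ℝ := (T.powerset.card : ℝ) with hc
  have hcpos : 0 < c := by
    rw [hc]
    exact_mod_cast Finset.card_pos.2 ⟨∅, Finset.empty_mem_powerset T⟩
  have hsum_eq : ∀ w : ℝ, ∫ ω, (∑ A ∈ T.powerset, φ (S (vA A w ω))) ∂μ
      = c * ∫ ω, φ (S (inn w ω)) ∂μ := by
    intro w
    rw [integral_finset_sum _ fun A hA => (keyInt w A (Finset.mem_powerset.1 hA)).1]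
    rw [Finset.sum_congr rfl fun A hA => (keyInt w A (Finset.mem_powerset.1 hA)).2]
    rw [Finset.sum_const, nsmul_eq_mul, hc]
  rw [hsum_eq z] at hI
  rw [integral_add ((sumint x).const_mul a) ((sumint y).const_mul b),
    integral_const_mul, integral_const_mul, hsum_eq x, hsum_eq y] at hI
  have hfin : c * ∫ ω, φ (S (inn z ω)) ∂μ
      ≤ c * (a * ∫ ω, φ (S (inn x ω)) ∂μ + b * ∫ ω, φ (S (inn y ω)) ∂μ) := by
    nlinarith [hI]
  exact le_of_mul_le_mul_left hfin hcpos
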